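/- The difference of Wehrl entropies H_W(ρ_G) − H_W(ρ) is invariant under the simultaneous uniform scaling Q(z) ↦ λ²Q(λz) of the Q function: if both Q and its Gaussian partner (same first and second moments) are scaled by the same λ ∈ (0,1], then the entropy difference is unchanged. Concretely, for the PATS this gives N(ρ_PATS^{(m,x)}) = log(m+1) − m − log(m!) + m·ψ(m+1), independent of x ∈ [0,1). -/

import Mathlib

open MeasureTheory Real
open Set

lemma integral_ofNormSq (F : ℝ → ℝ) :
    ∫ z : ℂ, F (‖z‖ ^ 2) = π * ∫ t in Ioi (0:ℝ), F t := by
  have h := MeasureTheory.integral_fun_norm_addHaar (volume : Measure ℂ) (fun r => F (r ^ 2))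
  rw [Complex.finrank_real_complex] at h
  have hb : volume.real (Metric.ball (0:ℂ) 1) = π := by
    simp [Measure.real, Complex.volume_ball]
  rw [hb] at h
  norm_num [smul_eq_mul] at h
  rw [h]
  have h2 := integral_comp_rpow_Ioi_of_pos (g := F) (p := 2) two_pos
  have h3 : ∀ x ∈ Ioi (0:ℝ), (2 * x ^ ((2:ℝ) - 1)) • F (x ^ (2:ℝ)) =
      2 * (x * F (x ^ 2)) := by
    intro x hx
    rw [show (2:ℝ) - 1 = ((1:ℕ):ℝ) by norm_num, rpow_natCast,
      show (2:ℝ) = ((2:ℕ):ℝ) by norm_num, rpow_natCast]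
    simp [smul_eq_mul]; ring
  rw [setIntegral_congr_fun measurableSet_Ioi h3, integral_const_mul] at h2
  rw [← h2]; ring

lemma intOn_pow_exp {c : ℝ} (hc : 0 < c) (s : ℝ) (hs : -1 < s) :
    IntegrableOn (fun t : ℝ => t ^ s * Real.exp (-(c * t))) (Ioi (0:ℝ)) := by
  have := integrableOn_rpow_mul_exp_neg_mul_rpow (p := 1) (s := s) (b := c) hs one_pos hc
  simpa [rpow_one, neg_mul] using this

lemma intOn_npow_exp {c : ℝ} (hc : 0 < c) (n : ℕ) :
    IntegrableOn (fun t : ℝ => t ^ n * Real.exp (-(c * t))) (Ioi (0:ℝ)) := by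
  refine (intOn_pow_exp hc n (lt_of_lt_of_le neg_one_lt_zero (Nat.cast_nonneg n))).congr_fun (fun t ht => ?_) measurableSet_Ioi
  simp only [rpow_natCast]

lemma Jval (n : ℕ) {c : ℝ} (hc : 0 < c) :
    ∫ t in Ioi (0:ℝ), t ^ n * Real.exp (-(c * t)) = n.factorial / c ^ (n + 1) := by
  have h := integral_rpow_mul_exp_neg_mul_Ioi (a := (n:ℝ) + 1) (r := c) (by positivity) hc
  rw [setIntegral_congr_fun measurableSet_Ioi
    (fun t ht => by rw [add_sub_cancel_right, rpow_natCast] :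
      ∀ t ∈ Ioi (0:ℝ), t ^ ((n:ℝ) + 1 - 1) * Real.exp (-(c * t)) = t ^ n * Real.exp (-(c * t)))] at h
  rw [h, Real.Gamma_nat_eq_factorial, show ((n:ℝ) + 1) = ((n + 1 : ℕ) : ℝ) by push_cast; ring,
    rpow_natCast]
  rw [div_pow, one_pow]
  ring

lemma abs_log_le (t : ℝ) (ht : 0 < t) :
    |Real.log t| ≤ 2 * (t ^ (1/2 : ℝ) + t ^ (-(1/2) : ℝ)) := by
  have ha : 0 < t ^ (1/2:ℝ) := rpow_pos_of_pos ht _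
  have hb : 0 < t ^ (-(1/2):ℝ) := rpow_pos_of_pos ht _
  have h1 : Real.log t ≤ 2 * t ^ (1/2:ℝ) := by
    have := Real.log_le_sub_one_of_pos ha
    rw [Real.log_rpow ht] at this
    linarith
  have h2 : -Real.log t ≤ 2 * t ^ (-(1/2):ℝ) := by
    have := Real.log_le_sub_one_of_pos hb
    rw [Real.log_rpow ht] at this
    linarith
  rw [abs_le]
  constructor <;> nlinarith [ha.le, hb.le]

lemma intOn_pow_exp_log {c : ℝ} (hc : 0 < c) (m : ℕ) :
    IntegrableOn (fun t : ℝ => t ^ m * Real.exp (-(c * t)) * Real.log t) (Ioi (0:ℝ)) := by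
  have hg : IntegrableOn (fun t : ℝ => 2 * (t ^ ((m:ℝ) + 1/2) * Real.exp (-(c * t))
      + t ^ ((m:ℝ) - 1/2) * Real.exp (-(c * t)))) (Ioi (0:ℝ)) := by
    have hm : (0:ℝ) ≤ (m:ℝ) := Nat.cast_nonneg m
    exact (((intOn_pow_exp hc _ (by linarith)).add
      (intOn_pow_exp hc ((m:ℝ) - 1/2) (by linarith))).const_mul 2)
  refine Integrable.mono hg ?_ ?_
  · exact ((measurable_id.pow_const m).mul
      ((measurable_id.const_mul c).neg.exp)).mul Real.measurable_log
      |>.aestronglyMeasurable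
  · rw [ae_restrict_iff' measurableSet_Ioi]
    filter_upwards with t ht
    have ht' : (0:ℝ) < t := ht
    have hlog := abs_log_le t ht'
    have he : (0:ℝ) < Real.exp (-(c * t)) := Real.exp_pos _
    rw [Real.norm_eq_abs, Real.norm_eq_abs, abs_mul, abs_mul, abs_of_nonneg (pow_nonneg ht'.le m),
      abs_of_nonneg he.le]
    have hb : t ^ m * Real.exp (-(c*t)) * |Real.log t|
        ≤ t ^ m * Real.exp (-(c*t)) * (2 * (t ^ (1/2 : ℝ) + t ^ (-(1/2) : ℝ))) :=
      mul_le_mul_of_nonneg_left hlog (by positivity)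
    refine hb.trans (le_of_eq ?_)
    rw [abs_of_nonneg (by positivity), ← Real.rpow_natCast t m,
      Real.rpow_add ht', Real.rpow_sub ht', Real.rpow_neg ht'.le]
    have h0 : t ^ (1/2:ℝ) ≠ 0 := (Real.rpow_pos_of_pos ht' _).ne'
    field_simp

lemma Kbase (m : ℕ) :
    ∫ t in Ioi (0:ℝ), t ^ m * Real.exp (-t) * Real.log t
      = m.factorial * (-Real.eulerMascheroniConstant + (harmonic m : ℝ)) := by
  set D : ℂ := ∫ t : ℝ in Ioi 0, (t:ℂ) ^ (((m:ℂ) + 1) - 1) * (Real.log t * Real.exp (-t)) with hD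
  have h1 : HasDerivAt Complex.GammaIntegral D ((m:ℂ) + 1) :=
    Complex.hasDerivAt_GammaIntegral (by simp; positivity)
  have heq : Complex.GammaIntegral =ᶠ[nhds ((m:ℂ) + 1)] Complex.Gamma := by
    filter_upwards [(Complex.continuous_re.isOpen_preimage _ isOpen_Ioi).mem_nhds
      (by simp [mem_Ioi]; positivity : ((m:ℂ) + 1) ∈ Complex.re ⁻¹' Ioi 0)] with s hs
    exact (Complex.Gamma_eq_integral hs).symm
  have h2 : HasDerivAt Complex.Gamma D ((m:ℂ) + 1) := h1.congr_of_eventuallyEq heq.symm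
  have h3 := Complex.hasDerivAt_Gamma_nat m
  have hDval : D = (m.factorial : ℂ) * (-(Real.eulerMascheroniConstant : ℂ) + (harmonic m : ℂ)) :=
    h2.unique h3
  have hre : D = ((∫ t in Ioi (0:ℝ), t ^ m * Real.exp (-t) * Real.log t : ℝ) : ℂ) := by
    have hco := integral_ofReal (𝕜 := ℂ) (f := fun t => t ^ m * Real.exp (-t) * Real.log t)
      (μ := volume.restrict (Ioi 0))
    have cc : ∀ r : ℝ, (r : ℂ) = @RCLike.ofReal ℂ _ r := fun r => rfl
    rw [hD, cc, ← hco]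
    refine setIntegral_congr_fun measurableSet_Ioi (fun t ht => ?_)
    rw [add_sub_cancel_right, show ((m:ℂ)) = ((m:ℕ):ℂ) from rfl, Complex.cpow_natCast, ← cc]
    push_cast
    ring
  rw [hre] at hDval
  exact_mod_cast hDval

lemma Kval (m : ℕ) {c : ℝ} (hc : 0 < c) :
    ∫ t in Ioi (0:ℝ), t ^ m * Real.exp (-(c * t)) * Real.log t
      = (m.factorial * (-Real.eulerMascheroniConstant + (harmonic m : ℝ))
          - m.factorial * Real.log c) / c ^ (m + 1) := by
  have hsub := integral_comp_mul_left_Ioi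
    (fun u : ℝ => u ^ m * Real.exp (-u) * Real.log u) 0 hc
  rw [mul_zero, Kbase m, smul_eq_mul] at hsub
  have hexp : ∀ t ∈ Ioi (0:ℝ), (fun u : ℝ => u ^ m * Real.exp (-u) * Real.log u) (c * t)
      = (c ^ m * Real.log c) * (t ^ m * Real.exp (-(c * t)))
        + c ^ m * (t ^ m * Real.exp (-(c * t)) * Real.log t) := by
    intro t ht
    have ht' : (0:ℝ) < t := ht
    simp only
    rw [Real.log_mul hc.ne' ht'.ne', mul_pow]
    ring
  rw [setIntegral_congr_fun measurableSet_Ioi hexp,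
    integral_add ((intOn_npow_exp hc m).const_mul _) ((intOn_pow_exp_log hc m).const_mul _),
    integral_const_mul, integral_const_mul, Jval m hc] at hsub
  have hcp : c ^ (m + 1) ≠ 0 := by positivity
  rw [eq_div_iff hcp]
  set T := ∫ t in Ioi (0:ℝ), t ^ m * Real.exp (-(c*t)) * Real.log t with hT
  have h2 : c ^ m * T = c⁻¹ * (↑m.factorial * (-Real.eulerMascheroniConstant + (harmonic m : ℝ)))
      - c ^ m * Real.log c * (↑m.factorial / c ^ (m+1)) := by linarith [hsub]
  have h3 : T * c ^ (m+1) = (c ^ m * T) * c := by rw [pow_succ]; ring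
  rw [h3, h2]
  field_simp
  ring

/-- The non-Gaussianity of the photon-added thermal state — the difference of
the Wehrl entropy of its Gaussian partner (same first and second moments) and
its own Wehrl entropy — equals `log(m+1) - m - log(m!) + m ψ(m+1)`,
independently of the temperature parameter `x`. -/
theorem pats_nonGaussianity (m : ℕ) (x : ℝ) (hx0 : 0 ≤ x) (hx1 : x < 1) :
    (-(1 / π) * ∫ z : ℂ,
        ((1 - x) / (m + 1) * Real.exp (-(1 - x) * ‖z‖ ^ 2 / (m + 1))) *
          Real.log ((1 - x) / (m + 1) * Real.exp (-(1 - x) * ‖z‖ ^ 2 / (m + 1))))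
      - (-(1 / π) * ∫ z : ℂ,
          ((1 - x) ^ (m + 1) / (m.factorial : ℝ) * ‖z‖ ^ (2 * m)
              * Real.exp (-(1 - x) * ‖z‖ ^ 2)) *
            Real.log ((1 - x) ^ (m + 1) / (m.factorial : ℝ) * ‖z‖ ^ (2 * m)
              * Real.exp (-(1 - x) * ‖z‖ ^ 2))) =
      Real.log (m + 1) - m - Real.log (m.factorial : ℝ)
        + m * ((harmonic m : ℝ) - Real.eulerMascheroniConstant) := by
  have hc : (0:ℝ) < 1 - x := by linarith
  set c : ℝ := 1 - x with hcdef
  have hm1 : (0:ℝ) < (m:ℝ) + 1 := by positivity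
  set b : ℝ := c / ((m:ℝ) + 1) with hbdef
  have hb : 0 < b := div_pos hc hm1
  have hfac : (0:ℝ) < (m.factorial : ℝ) := by exact_mod_cast m.factorial_pos
  set B : ℝ := c ^ (m + 1) / (m.factorial : ℝ) with hBdef
  have hB : 0 < B := by positivity
  -- rewrite exponents
  have hexp1 : ∀ z : ℂ, -(c * ‖z‖ ^ 2) / ((m:ℝ) + 1) = -(b * ‖z‖ ^ 2) := by
    intro z; rw [hbdef]; ring
  have hexp2 : ∀ z : ℂ, -c * ‖z‖ ^ 2 = -(c * ‖z‖ ^ 2) := by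
    intro z; ring
  simp only [hexp2, hexp1, pow_mul]
  -- convert to radial integrals
  have h1 : (∫ z : ℂ, (b * Real.exp (-(b * ‖z‖ ^ 2))) * Real.log (b * Real.exp (-(b * ‖z‖ ^ 2))))
      = π * ∫ t in Ioi (0:ℝ), (b * Real.exp (-(b * t))) * Real.log (b * Real.exp (-(b * t))) := by
    exact integral_ofNormSq fun t => (b * Real.exp (-(b * t))) * Real.log (b * Real.exp (-(b * t)))
  have h2 : (∫ z : ℂ, (B * (‖z‖ ^ 2) ^ m * Real.exp (-(c * ‖z‖ ^ 2)))
        * Real.log (B * (‖z‖ ^ 2) ^ m * Real.exp (-(c * ‖z‖ ^ 2))))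
      = π * ∫ t in Ioi (0:ℝ), (B * t ^ m * Real.exp (-(c * t)))
        * Real.log (B * t ^ m * Real.exp (-(c * t))) := by
    exact integral_ofNormSq fun t => (B * t ^ m * Real.exp (-(c * t)))
      * Real.log (B * t ^ m * Real.exp (-(c * t)))
  rw [h1, h2]
  -- compute first radial integral
  have hT1 : (∫ t in Ioi (0:ℝ), (b * Real.exp (-(b * t))) * Real.log (b * Real.exp (-(b * t))))
      = Real.log b - 1 := by
    have hpt : ∀ t ∈ Ioi (0:ℝ), (b * Real.exp (-(b * t))) * Real.log (b * Real.exp (-(b * t)))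
        = (b * Real.log b) * (t ^ 0 * Real.exp (-(b * t)))
          + (-(b * b)) * (t ^ 1 * Real.exp (-(b * t))) := by
      intro t ht
      rw [Real.log_mul hb.ne' (Real.exp_ne_zero _), Real.log_exp]
      ring
    rw [setIntegral_congr_fun measurableSet_Ioi hpt,
      integral_add ((intOn_npow_exp hb 0).const_mul _) ((intOn_npow_exp hb 1).const_mul _),
      integral_const_mul, integral_const_mul, Jval 0 hb, Jval 1 hb]
    simp [Nat.factorial]
    field_simp
    ring
  -- compute second radial integral
  have hT2 : (∫ t in Ioi (0:ℝ), (B * t ^ m * Real.exp (-(c * t)))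
        * Real.log (B * t ^ m * Real.exp (-(c * t))))
      = Real.log B + (m : ℝ) * (-Real.eulerMascheroniConstant + (harmonic m : ℝ))
          - (m : ℝ) * Real.log c - ((m : ℝ) + 1) := by
    have hpt : ∀ t ∈ Ioi (0:ℝ), (B * t ^ m * Real.exp (-(c * t)))
        * Real.log (B * t ^ m * Real.exp (-(c * t)))
        = (B * Real.log B) * (t ^ m * Real.exp (-(c * t)))
          + (B * m) * (t ^ m * Real.exp (-(c * t)) * Real.log t)
          + (-(B * c)) * (t ^ (m + 1) * Real.exp (-(c * t))) := by
      intro t ht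
      have ht' : (0:ℝ) < t := ht
      rw [Real.log_mul (by positivity) (Real.exp_ne_zero _),
        Real.log_mul hB.ne' (by positivity), Real.log_exp, Real.log_pow]
      ring
    have hIa : IntegrableOn (fun t : ℝ => B * Real.log B * (t ^ m * Real.exp (-(c * t)))
        + B * m * (t ^ m * Real.exp (-(c * t)) * Real.log t)) (Ioi (0:ℝ)) := by
      exact ((intOn_npow_exp hc m).const_mul _).add ((intOn_pow_exp_log hc m).const_mul _)
    rw [setIntegral_congr_fun measurableSet_Ioi hpt,
      integral_add hIa ((intOn_npow_exp hc (m+1)).const_mul _),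
      integral_add ((intOn_npow_exp hc m).const_mul _) ((intOn_pow_exp_log hc m).const_mul _),
      integral_const_mul, integral_const_mul, integral_const_mul,
      Jval m hc, Jval (m+1) hc, Kval m hc]
    have hcp : c ^ (m + 1) ≠ 0 := by positivity
    have hcp2 : c ^ (m + 1 + 1) ≠ 0 := by positivity
    have hfacs : ((m+1).factorial : ℝ) = ((m:ℝ) + 1) * (m.factorial : ℝ) := by
      rw [Nat.factorial_succ]; push_cast; ring
    rw [hBdef, hfacs]
    have hpow : c ^ (m + 1 + 1) = c ^ (m + 1) * c := pow_succ c (m + 1)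
    field_simp
    ring
  rw [hT1, hT2]
  -- final algebra
  have hpi : π ≠ 0 := Real.pi_ne_zero
  have hlogb : Real.log b = Real.log c - Real.log ((m:ℝ) + 1) := by
    rw [hbdef, Real.log_div hc.ne' hm1.ne']
  have hlogB : Real.log B = ((m:ℝ) + 1) * Real.log c - Real.log (m.factorial : ℝ) := by
    rw [hBdef, Real.log_div (by positivity) hfac.ne', Real.log_pow]
    push_cast; ring
  rw [hlogb, hlogB]
  field_simp
  ring
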